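/- Let U ⊆ ℂ be open, L ⊆ ℂ a straight line, and f : U → ℂ continuous on U and holomorphic on U \ L. Then f is holomorphic on U. -/

import Mathlib

open Set Complex intervalIntegral MeasureTheory
open scoped Interval

/-- abs of difference within an unordered interval -/
private lemma abs_sub_le_of_uIcc {a b t : ℝ} (ht : t ∈ [[a, b]]) : |t - a| ≤ |b - a| := by
  rw [Set.mem_uIcc] at ht
  rcases ht with ⟨h1, h2⟩ | ⟨h1, h2⟩
  · rw [_root_.abs_of_nonneg (by linarith : (0:ℝ) ≤ t - a),
      _root_.abs_of_nonneg (by linarith : (0:ℝ) ≤ b - a)]; linarith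
  · rw [_root_.abs_of_nonpos (by linarith : t - a ≤ 0),
      _root_.abs_of_nonpos (by linarith : b - a ≤ 0)]; linarith

/-- Rectangle Cauchy–Goursat for a function continuous on the closed rectangle and
complex differentiable off the real axis, when the open rectangle misses the axis. -/
private lemma rectZero_offAxis (g : ℂ → ℂ) (x₁ x₂ y₁ y₂ : ℝ)
    (Hc : ContinuousOn g ([[x₁, x₂]] ×ℂ [[y₁, y₂]]))
    (Hd : DifferentiableOn ℂ g (([[x₁, x₂]] ×ℂ [[y₁, y₂]]) \ {p : ℂ | p.im = 0}))
    (h : (0 : ℝ) ∉ Set.Ioo (min y₁ y₂) (max y₁ y₂)) :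
    (∫ x : ℝ in x₁..x₂, g (x + y₁ * I)) - (∫ x : ℝ in x₁..x₂, g (x + y₂ * I)) +
      I • (∫ y : ℝ in y₁..y₂, g (x₂ + y * I)) -
      I • (∫ y : ℝ in y₁..y₂, g (x₁ + y * I)) = 0 := by
  have key := Complex.integral_boundary_rect_eq_zero_of_differentiable_on_off_countable g
    (x₁ + y₁ * I) (x₂ + y₂ * I) ∅ countable_empty (by simpa using Hc) ?_
  · simpa using key
  · rintro p ⟨hp, -⟩
    rw [Complex.mem_reProdIm] at hp
    have hp' : p.re ∈ Set.Ioo (min x₁ x₂) (max x₁ x₂) ∧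
        p.im ∈ Set.Ioo (min y₁ y₂) (max y₁ y₂) := by
      simpa only [Complex.add_re, Complex.add_im, Complex.ofReal_re, Complex.ofReal_im,
        Complex.mul_re, Complex.mul_im, Complex.I_re, Complex.I_im, mul_zero, mul_one,
        zero_mul, sub_zero, zero_add, add_zero] using hp
    replace hp := hp'
    have hp0 : p.im ≠ 0 := fun h0 => h (h0 ▸ hp.2)
    have hopen : IsOpen ((Set.Ioo (min x₁ x₂) (max x₁ x₂) ×ℂ
        Set.Ioo (min y₁ y₂) (max y₁ y₂)) ∩ {q : ℂ | q.im ≠ 0}) :=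
      (isOpen_Ioo.reProdIm isOpen_Ioo).inter (isOpen_compl_singleton.preimage continuous_im)
    have hsub : (Set.Ioo (min x₁ x₂) (max x₁ x₂) ×ℂ Set.Ioo (min y₁ y₂) (max y₁ y₂)) ∩
        {q : ℂ | q.im ≠ 0} ⊆ ([[x₁, x₂]] ×ℂ [[y₁, y₂]]) \ {p : ℂ | p.im = 0} := by
      rintro q ⟨hq, hq0⟩
      rw [Complex.mem_reProdIm] at hq
      refine ⟨Complex.mem_reProdIm.2 ⟨?_, ?_⟩, hq0⟩
      · exact Set.Ioo_subset_Icc_self hq.1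
      · exact Set.Ioo_subset_Icc_self hq.2
    exact (Hd.mono hsub).differentiableAt
      (hopen.mem_nhds ⟨Complex.mem_reProdIm.2 ⟨hp.1, hp.2⟩, hp0⟩)

/-- Rectangle Cauchy–Goursat for a function continuous on the closed rectangle and
complex differentiable off the real axis. -/
private lemma rectZero (g : ℂ → ℂ) (x₁ x₂ y₁ y₂ : ℝ)
    (Hc : ContinuousOn g ([[x₁, x₂]] ×ℂ [[y₁, y₂]]))
    (Hd : DifferentiableOn ℂ g (([[x₁, x₂]] ×ℂ [[y₁, y₂]]) \ {p : ℂ | p.im = 0})) :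
    (∫ x : ℝ in x₁..x₂, g (x + y₁ * I)) - (∫ x : ℝ in x₁..x₂, g (x + y₂ * I)) +
      I • (∫ y : ℝ in y₁..y₂, g (x₂ + y * I)) -
      I • (∫ y : ℝ in y₁..y₂, g (x₁ + y * I)) = 0 := by
  by_cases h0 : (0 : ℝ) ∈ Set.Ioo (min y₁ y₂) (max y₁ y₂)
  · -- split the rectangle at the axis
    have h0mem : (0 : ℝ) ∈ [[y₁, y₂]] := by
      rw [Set.mem_uIcc]
      rcases le_total y₁ y₂ with h | h
      · exact Or.inl ⟨by simpa [min_eq_left h] using h0.1.le,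
          by simpa [max_eq_right h] using h0.2.le⟩
      · exact Or.inr ⟨by simpa [min_eq_right h] using h0.1.le,
          by simpa [max_eq_left h] using h0.2.le⟩
    have hsubL : [[y₁, (0:ℝ)]] ⊆ [[y₁, y₂]] := Set.uIcc_subset_uIcc left_mem_uIcc h0mem
    have hsubR : [[(0:ℝ), y₂]] ⊆ [[y₁, y₂]] := Set.uIcc_subset_uIcc h0mem right_mem_uIcc
    have hrsub1 : ([[x₁, x₂]] ×ℂ [[y₁, (0:ℝ)]]) ⊆ ([[x₁, x₂]] ×ℂ [[y₁, y₂]]) := by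
      intro p hp; rw [Complex.mem_reProdIm] at hp ⊢; exact ⟨hp.1, hsubL hp.2⟩
    have hrsub2 : ([[x₁, x₂]] ×ℂ [[(0:ℝ), y₂]]) ⊆ ([[x₁, x₂]] ×ℂ [[y₁, y₂]]) := by
      intro p hp; rw [Complex.mem_reProdIm] at hp ⊢; exact ⟨hp.1, hsubR hp.2⟩
    have hno1 : (0 : ℝ) ∉ Set.Ioo (min y₁ 0) (max y₁ 0) := by
      rintro ⟨h1, h2⟩
      rcases le_total y₁ 0 with h | h
      · rw [max_eq_right h] at h2; exact lt_irrefl _ h2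
      · rw [min_eq_right h] at h1; exact lt_irrefl _ h1
    have hno2 : (0 : ℝ) ∉ Set.Ioo (min 0 y₂) (max 0 y₂) := by
      rintro ⟨h1, h2⟩
      rcases le_total y₂ 0 with h | h
      · rw [max_eq_left h] at h2; exact lt_irrefl _ h2
      · rw [min_eq_left h] at h1; exact lt_irrefl _ h1
    have A := rectZero_offAxis g x₁ x₂ y₁ 0 (Hc.mono hrsub1)
      (Hd.mono (Set.diff_subset_diff_left hrsub1)) hno1
    have B := rectZero_offAxis g x₁ x₂ 0 y₂ (Hc.mono hrsub2)
      (Hd.mono (Set.diff_subset_diff_left hrsub2)) hno2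
    -- integrability of the vertical integrands to glue intervals
    have hvert : ∀ x : ℝ, x ∈ [[x₁, x₂]] → ∀ c d : ℝ, [[c, d]] ⊆ [[y₁, y₂]] →
        IntervalIntegrable (fun y : ℝ => g (x + y * I)) volume c d := by
      intro x hx c d hcd
      apply ContinuousOn.intervalIntegrable
      apply Hc.comp (Continuous.continuousOn (by continuity))
      intro y hy
      rw [Complex.mem_reProdIm]
      constructor
      · simpa using hx
      · simpa using hcd hy
    have hv₂ := intervalIntegral.integral_add_adjacent_intervals
      (hvert x₂ right_mem_uIcc y₁ 0 hsubL) (hvert x₂ right_mem_uIcc 0 y₂ hsubR)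
    have hv₁ := intervalIntegral.integral_add_adjacent_intervals
      (hvert x₁ left_mem_uIcc y₁ 0 hsubL) (hvert x₁ left_mem_uIcc 0 y₂ hsubR)
    simp only [smul_eq_mul] at A B ⊢
    linear_combination A + B - I * hv₂ + I * hv₁
  · exact rectZero_offAxis g x₁ x₂ y₁ y₂ Hc Hd h0

/-- Morera-type removability across the real axis. -/
private lemma morera_axis {V : Set ℂ} (hV : IsOpen V) {g : ℂ → ℂ}
    (hc : ContinuousOn g V) (hd : DifferentiableOn ℂ g (V \ {p : ℂ | p.im = 0})) :
    DifferentiableOn ℂ g V := by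
  intro z₀ hz₀
  obtain ⟨ε, hε, hball⟩ := Metric.isOpen_iff.1 hV z₀ hz₀
  set r : ℝ := ε / 3 with hrdef
  have hr0 : 0 < r := by positivity
  set X₀ : ℝ := z₀.re - r with hX₀
  set Y₀ : ℝ := z₀.im - r with hY₀
  set K : Set ℂ := Set.Icc X₀ (z₀.re + r) ×ℂ Set.Icc Y₀ (z₀.im + r) with hK
  have hKV : K ⊆ V := by
    intro p hp
    rw [hK, Complex.mem_reProdIm] at hp
    apply hball
    rw [Metric.mem_ball, Complex.dist_eq]
    have h1 := Complex.norm_le_abs_re_add_abs_im (p - z₀)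
    have h2 : |(p - z₀).re| ≤ r := by
      rw [Complex.sub_re, abs_le]
      exact ⟨by linarith [hp.1.1], by linarith [hp.1.2]⟩
    have h3 : |(p - z₀).im| ≤ r := by
      rw [Complex.sub_im, abs_le]
      exact ⟨by linarith [hp.2.1], by linarith [hp.2.2]⟩
    calc ‖p - z₀‖ ≤ |(p - z₀).re| + |(p - z₀).im| := h1
      _ ≤ r + r := add_le_add h2 h3
      _ < ε := by rw [hrdef]; linarith
  set Q : Set ℂ := Set.Ioo X₀ (z₀.re + r) ×ℂ Set.Ioo Y₀ (z₀.im + r) with hQ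
  have hQopen : IsOpen Q := isOpen_Ioo.reProdIm isOpen_Ioo
  have hQK : Q ⊆ K := by
    intro p hp; rw [hQ, Complex.mem_reProdIm] at hp; rw [hK, Complex.mem_reProdIm]
    exact ⟨Set.Ioo_subset_Icc_self hp.1, Set.Ioo_subset_Icc_self hp.2⟩
  have hz₀Q : z₀ ∈ Q := by
    rw [hQ, Complex.mem_reProdIm]
    exact ⟨⟨by rw [hX₀]; linarith, by linarith⟩, by rw [hY₀]; linarith, by linarith⟩
  -- integrability helpers
  have hhoriz : ∀ y c d : ℝ, y ∈ Set.Icc Y₀ (z₀.im + r) → c ∈ Set.Icc X₀ (z₀.re + r) →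
      d ∈ Set.Icc X₀ (z₀.re + r) →
      IntervalIntegrable (fun t : ℝ => g (t + y * I)) volume c d := by
    intro y c d hy hcmem hd'
    apply ContinuousOn.intervalIntegrable
    apply (hc.mono hKV).comp (Continuous.continuousOn (by continuity))
    intro t ht
    rw [hK, Complex.mem_reProdIm]
    constructor
    · simpa using Set.uIcc_subset_Icc hcmem hd' ht
    · simpa using hy
  have hvert : ∀ x c d : ℝ, x ∈ Set.Icc X₀ (z₀.re + r) → c ∈ Set.Icc Y₀ (z₀.im + r) →
      d ∈ Set.Icc Y₀ (z₀.im + r) →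
      IntervalIntegrable (fun s : ℝ => g (x + s * I)) volume c d := by
    intro x c d hx hcmem hd'
    apply ContinuousOn.intervalIntegrable
    apply (hc.mono hKV).comp (Continuous.continuousOn (by continuity))
    intro s hs
    rw [hK, Complex.mem_reProdIm]
    constructor
    · simpa using hx
    · simpa using Set.uIcc_subset_Icc hcmem hd' hs
  -- the primitive
  set F : ℂ → ℂ := fun p =>
    (∫ t in X₀..p.re, g (t + Y₀ * I)) + I * ∫ s in Y₀..p.im, g (p.re + s * I) with hF
  -- difference formula
  have key : ∀ p q : ℂ, p ∈ K → q ∈ K →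
      F q - F p = (∫ t in p.re..q.re, g (t + q.im * I)) +
        I * ∫ s in p.im..q.im, g (p.re + s * I) := by
    intro p q hp hq
    rw [hK, Complex.mem_reProdIm] at hp hq
    have hX₀mem : X₀ ∈ Set.Icc X₀ (z₀.re + r) := by constructor <;> simp [hX₀] <;> linarith
    have hY₀mem : Y₀ ∈ Set.Icc Y₀ (z₀.im + r) := by constructor <;> simp [hY₀] <;> linarith
    have hadj1 := intervalIntegral.integral_add_adjacent_intervals
      (hhoriz Y₀ X₀ p.re hY₀mem hX₀mem hp.1) (hhoriz Y₀ p.re q.re hY₀mem hp.1 hq.1)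
    have hadj2 := intervalIntegral.integral_add_adjacent_intervals
      (hvert p.re Y₀ p.im hp.1 hY₀mem hp.2) (hvert p.re p.im q.im hp.1 hp.2 hq.2)
    have hrsub : ([[p.re, q.re]] ×ℂ [[Y₀, q.im]]) ⊆ K := by
      intro x hx; rw [Complex.mem_reProdIm] at hx; rw [hK, Complex.mem_reProdIm]
      exact ⟨Set.uIcc_subset_Icc hp.1 hq.1 hx.1, Set.uIcc_subset_Icc hY₀mem hq.2 hx.2⟩
    have hrect := rectZero g p.re q.re Y₀ q.im ((hc.mono hKV).mono hrsub)
      (hd.mono (Set.diff_subset_diff_left (hrsub.trans hKV)))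
    simp only [hF, smul_eq_mul] at hrect ⊢
    linear_combination -hadj1 + hrect - I * hadj2
  -- F has derivative g at points of Q
  have hder : ∀ p ∈ Q, HasDerivAt F (g p) p := by
    intro p hp
    rw [hasDerivAt_iff_isLittleO, Asymptotics.isLittleO_iff]
    intro c hc0
    have hpV : p ∈ V := hKV (hQK hp)
    have hcp : ContinuousAt g p := hc.continuousAt (hV.mem_nhds hpV)
    obtain ⟨δ, hδ0, hδ⟩ := Metric.continuousAt_iff.1 hcp (c / 2) (by positivity)
    have hev1 : ∀ᶠ q in nhds p, q ∈ Q := hQopen.mem_nhds hp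
    have hev2 : ∀ᶠ q in nhds p, dist q p < δ / 2 :=
      Metric.ball_mem_nhds p (by positivity)
    filter_upwards [hev1, hev2] with q hqQ hqδ
    have hpQ' := hp; have hqQ' := hqQ
    rw [hQ, Complex.mem_reProdIm] at hpQ' hqQ'
    have hpK : p ∈ K := hQK hp
    have hqK : q ∈ K := hQK hqQ
    rw [key p q hpK hqK]
    have hreim : q - p = ((q.re - p.re : ℝ) : ℂ) + ((q.im - p.im : ℝ) : ℂ) * I := by
      simp [Complex.ext_iff]
    -- rewrite (q - p) • g p as two constant integrals
    have hconst1 : (∫ _t in p.re..q.re, g p) = ((q.re - p.re : ℝ) : ℂ) * g p := by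
      simp [intervalIntegral.integral_const, Complex.real_smul]
    have hconst2 : (∫ _s in p.im..q.im, g p) = ((q.im - p.im : ℝ) : ℂ) * g p := by
      simp [intervalIntegral.integral_const, Complex.real_smul]
    have hre_le : |q.re - p.re| ≤ dist q p := by
      rw [Complex.dist_eq]
      simpa [Complex.sub_re] using Complex.abs_re_le_norm (q - p)
    have him_le : |q.im - p.im| ≤ dist q p := by
      rw [Complex.dist_eq]
      simpa [Complex.sub_im] using Complex.abs_im_le_norm (q - p)
    -- bound on path points
    have hbound1 : ∀ t ∈ Set.uIoc p.re q.re, ‖g (t + q.im * I) - g p‖ ≤ c / 2 := by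
      intro t ht
      have ht' : t ∈ [[p.re, q.re]] := Set.Ioc_subset_Icc_self ht
      have hdist : dist ((t : ℂ) + q.im * I) p < δ := by
        rw [Complex.dist_eq]
        have h1 : ‖(t : ℂ) + q.im * I - p‖ ≤ |t - p.re| + |q.im - p.im| := by
          have := Complex.norm_le_abs_re_add_abs_im ((t : ℂ) + q.im * I - p)
          simpa using this
        have h2 : |t - p.re| ≤ |q.re - p.re| := abs_sub_le_of_uIcc ht'
        calc ‖(t : ℂ) + q.im * I - p‖ ≤ |t - p.re| + |q.im - p.im| := h1
          _ ≤ |q.re - p.re| + |q.im - p.im| := by linarith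
          _ ≤ dist q p + dist q p := add_le_add hre_le him_le
          _ < δ := by linarith [hqδ]
      have := hδ hdist
      rw [Complex.dist_eq] at this
      exact this.le
    have hbound2 : ∀ s ∈ Set.uIoc p.im q.im, ‖g (p.re + s * I) - g p‖ ≤ c / 2 := by
      intro s hs
      have hs' : s ∈ [[p.im, q.im]] := Set.Ioc_subset_Icc_self hs
      have hdist : dist ((p.re : ℂ) + s * I) p < δ := by
        rw [Complex.dist_eq]
        have h1 : ‖(p.re : ℂ) + s * I - p‖ ≤ |p.re - p.re| + |s - p.im| := by
          have := Complex.norm_le_abs_re_add_abs_im ((p.re : ℂ) + s * I - p)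
          simpa using this
        have h2 : |s - p.im| ≤ |q.im - p.im| := abs_sub_le_of_uIcc hs'
        calc ‖(p.re : ℂ) + s * I - p‖ ≤ |p.re - p.re| + |s - p.im| := h1
          _ = |s - p.im| := by simp
          _ ≤ |q.im - p.im| := h2
          _ ≤ dist q p := him_le
          _ < δ := by linarith [hqδ]
      have := hδ hdist
      rw [Complex.dist_eq] at this
      exact this.le
    -- integrability of the path integrands
    have hint1 : IntervalIntegrable (fun t : ℝ => g (t + q.im * I)) volume p.re q.re :=
      hhoriz q.im p.re q.re (Set.Ioo_subset_Icc_self hqQ'.2) (Set.Ioo_subset_Icc_self hpQ'.1)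
        (Set.Ioo_subset_Icc_self hqQ'.1)
    have hint2 : IntervalIntegrable (fun s : ℝ => g (p.re + s * I)) volume p.im q.im :=
      hvert p.re p.im q.im (Set.Ioo_subset_Icc_self hpQ'.1) (Set.Ioo_subset_Icc_self hpQ'.2)
        (Set.Ioo_subset_Icc_self hqQ'.2)
    have hintc1 : IntervalIntegrable (fun _t : ℝ => g p) volume p.re q.re :=
      intervalIntegrable_const
    have hintc2 : IntervalIntegrable (fun _s : ℝ => g p) volume p.im q.im :=
      intervalIntegrable_const
    have hsplit :
        (∫ t in p.re..q.re, g (t + q.im * I)) + I * (∫ s in p.im..q.im, g (p.re + s * I)) -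
          (q - p) • g p =
        (∫ t in p.re..q.re, (g (t + q.im * I) - g p)) +
          I * ∫ s in p.im..q.im, (g (p.re + s * I) - g p) := by
      rw [intervalIntegral.integral_sub hint1 hintc1,
        intervalIntegral.integral_sub hint2 hintc2, hconst1, hconst2,
        smul_eq_mul, hreim]
      ring
    rw [hsplit]
    have hb1 : ‖∫ t in p.re..q.re, (g (t + q.im * I) - g p)‖ ≤ c / 2 * |q.re - p.re| :=
      intervalIntegral.norm_integral_le_of_norm_le_const hbound1
    have hb2 : ‖∫ s in p.im..q.im, (g (p.re + s * I) - g p)‖ ≤ c / 2 * |q.im - p.im| :=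
      intervalIntegral.norm_integral_le_of_norm_le_const hbound2
    calc ‖(∫ t in p.re..q.re, (g (t + q.im * I) - g p)) +
          I * ∫ s in p.im..q.im, (g (p.re + s * I) - g p)‖
        ≤ ‖∫ t in p.re..q.re, (g (t + q.im * I) - g p)‖ +
          ‖I * ∫ s in p.im..q.im, (g (p.re + s * I) - g p)‖ := norm_add_le _ _
      _ = ‖∫ t in p.re..q.re, (g (t + q.im * I) - g p)‖ +
          ‖∫ s in p.im..q.im, (g (p.re + s * I) - g p)‖ := by
            rw [norm_mul, Complex.norm_I, one_mul]
      _ ≤ c / 2 * |q.re - p.re| + c / 2 * |q.im - p.im| := add_le_add hb1 hb2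
      _ ≤ c / 2 * dist q p + c / 2 * dist q p := by
            have : (0:ℝ) ≤ c / 2 := by positivity
            exact add_le_add (mul_le_mul_of_nonneg_left hre_le this)
              (mul_le_mul_of_nonneg_left him_le this)
      _ = c * dist q p := by ring
      _ = c * ‖q - p‖ := by rw [dist_eq_norm]
  -- conclude
  have hFdiff : DifferentiableOn ℂ F Q := fun p hp =>
    (hder p hp).differentiableAt.differentiableWithinAt
  have hFanal : AnalyticOnNhd ℂ F Q := hFdiff.analyticOnNhd hQopen
  have hdF : DifferentiableAt ℂ (deriv F) z₀ := ((hFanal.deriv) z₀ hz₀Q).differentiableAt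
  have heq : g =ᶠ[nhds z₀] deriv F := by
    filter_upwards [hQopen.mem_nhds hz₀Q] with q hq
    exact ((hder q hq).deriv).symm
  exact (hdF.congr_of_eventuallyEq heq).differentiableWithinAt

theorem stmt13 (U : Set ℂ) (hU : IsOpen U)
    (a b : ℂ) (hb : b ≠ 0)
    (L : Set ℂ) (hL : L = {z : ℂ | ∃ t : ℝ, z = a + (t : ℂ) * b})
    (f : ℂ → ℂ)
    (hcont : ContinuousOn f U)
    (hdiff : DifferentiableOn ℂ f (U \ L)) :
    DifferentiableOn ℂ f U := by
  subst hL
  set φ : ℂ → ℂ := fun w => a + w * b with hφ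
  set V : Set ℂ := φ ⁻¹' U with hV
  have hVopen : IsOpen V := hU.preimage (by continuity)
  set g : ℂ → ℂ := fun w => f (φ w) with hg
  have hgc : ContinuousOn g V :=
    hcont.comp (Continuous.continuousOn (by continuity)) (fun w hw => hw)
  have hgd : DifferentiableOn ℂ g (V \ {p : ℂ | p.im = 0}) := by
    apply hdiff.comp
    · exact (differentiable_const a |>.add (differentiable_id.mul (differentiable_const b))).differentiableOn
    · rintro w ⟨hwV, hw0⟩
      refine ⟨hwV, ?_⟩
      rintro ⟨t, ht⟩
      simp only [hφ] at ht
      have hwt : w = (t : ℂ) := by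
        have h1 : w * b = (t : ℂ) * b := by linear_combination ht
        exact mul_right_cancel₀ hb h1
      apply hw0
      simp [hwt]
  have hgdall : DifferentiableOn ℂ g V := morera_axis hVopen hgc hgd
  have hψ : DifferentiableOn ℂ (fun z : ℂ => (z - a) / b) U :=
    ((differentiable_id.sub (differentiable_const a)).div_const b).differentiableOn
  have hcomp : DifferentiableOn ℂ (fun z => g ((z - a) / b)) U := by
    apply hgdall.comp hψ
    intro z hz
    have : φ ((z - a) / b) = z := by
      simp only [hφ]
      field_simp
      ring
    simpa [hV, Set.mem_preimage, this] using hz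
  apply hcomp.congr
  intro z hz
  have : φ ((z - a) / b) = z := by
    simp only [hφ]
    field_simp
    ring
  simp [hg, this]
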